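/- Let l₁,…,l_d be (k-1)-planes in ℙⁿ in special position with respect to (n-k)-planes, and suppose R ⊂ ℙⁿ is a linear subspace containing all l_i with i ≠ j for some fixed j. Then l_j ⊆ R as well. -/

import Mathlib

set_option synthInstance.maxHeartbeats 400000
set_option maxHeartbeats 800000

open Module

/-- Let `l₁,…,l_d` be `(k-1)`-planes in `ℙⁿ` in special position with respect to
`(n-k)`-planes, and suppose `R ⊂ ℙⁿ` is a linear subspace containing all `l_i` with
`i ≠ j` for some fixed `j`. Then `l_j ⊆ R` as well. Projective subspaces are formulated
as linear subspaces of `ℂ^{n+1}`. -/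
theorem special_position_contained_in_span
    (n k d : ℕ) (hk : 2 ≤ k) (hkn : k ≤ n) (hd : 2 ≤ d) (hdn : d ≤ n)
    (l : Fin d → Submodule ℂ (Fin (n + 1) → ℂ))
    (hl : ∀ i, finrank ℂ (l i) = k)
    (hsp : ∀ i, ∀ L : Submodule ℂ (Fin (n + 1) → ℂ), finrank ℂ L = n - k + 1 →
      (∀ j, j ≠ i → l j ⊓ L ≠ ⊥) → l i ⊓ L ≠ ⊥)
    (j : Fin d) (R : Submodule ℂ (Fin (n + 1) → ℂ))
    (hR : ∀ i, i ≠ j → l i ≤ R) :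
    l j ≤ R := by
  by_contra hcon
  obtain ⟨v, hvl, hvR⟩ := Set.not_subset.mp hcon
  -- a hyperplane H = ker f containing R, missing v
  obtain ⟨f, hfv, hfR⟩ := Submodule.exists_dual_map_eq_bot_of_notMem hvR inferInstance
  set H : Submodule ℂ (Fin (n + 1) → ℂ) := LinearMap.ker f with hH
  have hRH : R ≤ H := by
    intro x hx
    have : f x ∈ R.map f := ⟨x, hx, rfl⟩
    rw [hfR] at this
    simpa [H, LinearMap.mem_ker] using this
  have hvH : v ∉ H := by simpa [H, LinearMap.mem_ker] using hfv
  have htop : finrank ℂ (Fin (n + 1) → ℂ) = n + 1 := by simp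
  have hrange : finrank ℂ (LinearMap.range f) = 1 := by
    have h1 : LinearMap.range f = ⊤ := by
      rw [LinearMap.range_eq_top]
      intro c
      exact ⟨(c / f v) • v, by rw [map_smul, smul_eq_mul]; field_simp⟩
    rw [h1, finrank_top]
    simp
  have hHrank : finrank ℂ H = n := by
    have := f.finrank_range_add_finrank_ker
    rw [hrange, htop] at this
    rw [hH]
    omega
  -- P = l j ⊓ H has rank k - 1
  have hPlt : H < l j ⊔ H :=
    lt_of_le_of_ne le_sup_right (fun h => hvH (h ▸ Submodule.mem_sup_left hvl))
  have hsup : finrank ℂ ↥(l j ⊔ H) = n + 1 := by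
    have h1 : finrank ℂ ↥(l j ⊔ H) ≤ n + 1 := le_trans (Submodule.finrank_le _) (le_of_eq htop)
    have h2 := Submodule.finrank_lt_finrank_of_lt hPlt
    omega
  have hPrank : finrank ℂ ↥(l j ⊓ H) = k - 1 := by
    have := Submodule.finrank_sup_add_finrank_inf_eq (l j) H
    rw [hsup, hl j, hHrank] at this
    omega
  -- complement C of P inside H
  obtain ⟨C', hC'⟩ := Submodule.exists_isCompl ((l j ⊓ H).comap H.subtype)
  set C : Submodule ℂ (Fin (n + 1) → ℂ) := C'.map H.subtype with hC
  have hCH : C ≤ H := by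
    rintro x ⟨y, -, rfl⟩; exact y.2
  have hCrank : finrank ℂ C = n - k + 1 := by
    have hmap : finrank ℂ C = finrank ℂ C' := Submodule.finrank_map_subtype_eq H C'
    have hcompl := Submodule.finrank_add_eq_of_isCompl hC'
    have hme : Submodule.map H.subtype ((l j ⊓ H).comap H.subtype) = l j ⊓ H := by
      rw [Submodule.map_comap_eq, Submodule.range_subtype]
      exact inf_eq_right.mpr inf_le_right
    have hcomap : finrank ℂ ((l j ⊓ H).comap H.subtype) = k - 1 := by
      have h2 := Submodule.finrank_map_subtype_eq H ((l j ⊓ H).comap H.subtype)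
      rw [hme] at h2
      rw [← h2, hPrank]
    rw [hcomap, hHrank] at hcompl
    omega
  -- C meets each l i, i ≠ j
  have hmeet : ∀ i, i ≠ j → l i ⊓ C ≠ ⊥ := by
    intro i hij hbot
    have hle : l i ⊔ C ≤ H := sup_le ((hR i hij).trans hRH) hCH
    have h1 : finrank ℂ ↥(l i ⊔ C) ≤ n := le_trans (Submodule.finrank_mono hle) (le_of_eq hHrank)
    have := Submodule.finrank_sup_add_finrank_inf_eq (l i) C
    rw [hbot, hl i, hCrank, finrank_bot] at this
    omega
  -- but C misses l j
  have hdisj : l j ⊓ C = ⊥ := by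
    rw [Submodule.eq_bot_iff]
    rintro x ⟨hxl, hxC⟩
    obtain ⟨y, hyC', rfl⟩ := hxC
    have hyP : y ∈ (l j ⊓ H).comap H.subtype := by
      simp only [Submodule.mem_comap]
      exact ⟨hxl, y.2⟩
    have := hC'.inf_eq_bot ▸ (Submodule.mem_inf.mpr ⟨hyP, hyC'⟩)
    simp only [Submodule.mem_bot] at this
    simp [this]
  exact hsp j C hCrank hmeet hdisj
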